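/- Let n ≥ 1, 1 < p < q < ∞, γ, δ ∈ ℝ with γ + δ > 0, and ζ = n/p - n/q + (γ+δ)/2. Suppose (u₀,v₀) ∈ ℝⁿ × ℝⁿ with √(|u₀|²+|v₀|²) > 3, and Q₁ × Q₂ ⊂ ℝⁿ × ℝⁿ is a product of axis-parallel cubes centered at (u₀,v₀) with vol(Q₂)^{1/n} = 1 and vol(Q₁)^{1/n} = λ ∈ (0,1], so that the diameter of Q₁ × Q₂ is at most, say, 2√(2n). If for all (u,v) ∈ Q₁ × Q₂ one has (1/2)√(|u₀|²+|v₀|²) ≤ √(|u|²+|v|²) ≤ 2√(|u₀|²+|v₀|²), then for any r > 1, vol(Q₁)^{ζ/n - 1/p + 1/q} vol(Q₂)^{ζ/n - 1/p + 1/q} · [(1/(vol Q₁ vol Q₂)) ∫∫_{Q₁×Q₂} (|u|²+|v|²)^{-γqr/2} du dv]^{1/(qr)} · [(1/(vol Q₁ vol Q₂)) ∫∫_{Q₁×Q₂} (|u|²+|v|²)^{-δpr/(2(p-1))} du dv]^{(p-1)/(pr)} ≤ C(p,q,r,γ,δ) · λ^{(γ+δ)/(2n)} with a constant C depending only on p,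 q, r, γ, δ, n. -/

import Mathlib

open MeasureTheory

/-- Axis-parallel cube in `ℝⁿ` with center `c` and side length `ℓ`. -/
def cube (n : ℕ) (c : EuclideanSpace ℝ (Fin n)) (ℓ : ℝ) : Set (EuclideanSpace ℝ (Fin n)) :=
  {x | ∀ i, |x i - c i| ≤ ℓ / 2}

lemma cube_eq_preimage (n : ℕ) (c : EuclideanSpace ℝ (Fin n)) (ℓ : ℝ) :
    cube n c ℓ = (MeasurableEquiv.toLp 2 (Fin n → ℝ)).symm ⁻¹'
      (Set.univ.pi fun i => Set.Icc (c i - ℓ / 2) (c i + ℓ / 2)) := by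
  ext x
  simp only [cube, Set.mem_setOf_eq, Set.mem_preimage, Set.mem_univ_pi, Set.mem_Icc,
    MeasurableEquiv.toLp_symm_apply]
  constructor
  · intro h i
    have := abs_le.1 (h i)
    constructor
    · have := this.1; linarith
    · have := this.2; linarith
  · intro h i
    have := h i
    rw [abs_le]
    constructor <;> linarith [this.1, this.2]

lemma measurableSet_cube (n : ℕ) (c : EuclideanSpace ℝ (Fin n)) (ℓ : ℝ) :
    MeasurableSet (cube n c ℓ) := by
  rw [cube_eq_preimage]
  exact (MeasurableEquiv.measurable _) (MeasurableSet.univ_pi fun i => measurableSet_Icc)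

lemma volume_cube (n : ℕ) (c : EuclideanSpace ℝ (Fin n)) (ℓ : ℝ) :
    volume (cube n c ℓ) = ENNReal.ofReal ℓ ^ n := by
  rw [cube_eq_preimage,
    (EuclideanSpace.volume_preserving_symm_measurableEquiv_toLp (Fin n)).measure_preimage
      (MeasurableSet.univ_pi fun i => measurableSet_Icc).nullMeasurableSet,
    volume_pi_pi]
  have : ∀ i : Fin n, volume (Set.Icc (c i - ℓ / 2) (c i + ℓ / 2)) = ENNReal.ofReal ℓ := by
    intro i
    rw [Real.volume_Icc]
    congr 1
    ring
  simp [this]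

lemma rpow_bound (e x S : ℝ) (hS : 0 < S) (h1 : S / 4 ≤ x) (h2 : x ≤ 4 * S) :
    x ^ e ≤ 4 ^ |e| * S ^ e := by
  rcases le_or_gt 0 e with he | he
  · rw [abs_of_nonneg he]
    calc x ^ e ≤ (4 * S) ^ e := Real.rpow_le_rpow (by linarith) h2 he
      _ = 4 ^ e * S ^ e := Real.mul_rpow (by norm_num) hS.le
  · rw [abs_of_neg he]
    have hx0 : 0 < x := by linarith
    calc x ^ e ≤ (S / 4) ^ e := Real.rpow_le_rpow_of_nonpos (by linarith) h1 he.le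
      _ = S ^ e / 4 ^ e := Real.div_rpow hS.le (by norm_num : (0:ℝ) ≤ 4) e
      _ = 4 ^ (-e) * S ^ e := by
          rw [Real.rpow_neg (by norm_num)]
          field_simp

set_option maxHeartbeats 1000000 in
theorem stmt15 (n : ℕ) (hn : 1 ≤ n) (p q γ δ r ζ : ℝ) (hp : 1 < p) (hpq : p < q)
    (hgd : 0 < γ + δ) (hr : 1 < r)
    (hζ : ζ = (n : ℝ) / p - (n : ℝ) / q + (γ + δ) / 2) :
    ∃ C : ℝ, 0 < C ∧
      ∀ (u₀ v₀ : EuclideanSpace ℝ (Fin n)) (lam : ℝ),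
        3 < Real.sqrt (‖u₀‖ ^ 2 + ‖v₀‖ ^ 2) → 0 < lam → lam ≤ 1 →
        (∀ u ∈ cube n u₀ lam, ∀ v ∈ cube n v₀ 1,
          (1 / 2) * Real.sqrt (‖u₀‖ ^ 2 + ‖v₀‖ ^ 2) ≤ Real.sqrt (‖u‖ ^ 2 + ‖v‖ ^ 2) ∧
          Real.sqrt (‖u‖ ^ 2 + ‖v‖ ^ 2) ≤ 2 * Real.sqrt (‖u₀‖ ^ 2 + ‖v₀‖ ^ 2)) →
        (volume (cube n u₀ lam)).toReal ^ (ζ / (n : ℝ) - 1 / p + 1 / q) *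
          (volume (cube n v₀ 1)).toReal ^ (ζ / (n : ℝ) - 1 / p + 1 / q) *
          ((1 / ((volume (cube n u₀ lam)).toReal * (volume (cube n v₀ 1)).toReal)) *
            ∫ u in cube n u₀ lam, ∫ v in cube n v₀ 1,
              (‖u‖ ^ 2 + ‖v‖ ^ 2) ^ (-(γ * q * r) / 2)) ^ (1 / (q * r)) *
          ((1 / ((volume (cube n u₀ lam)).toReal * (volume (cube n v₀ 1)).toReal)) *
            ∫ u in cube n u₀ lam, ∫ v in cube n v₀ 1,
              (‖u‖ ^ 2 + ‖v‖ ^ 2) ^ (-(δ * p * r) / (2 * (p - 1)))) ^ ((p - 1) / (p * r))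
        ≤ C * lam ^ ((γ + δ) / (2 * (n : ℝ))) := by
  have hn0 : (0:ℝ) < n := by exact_mod_cast hn
  have hp0 : 0 < p := by linarith
  have hq0 : 0 < q := by linarith
  have hr0 : 0 < r := by linarith
  have hp1 : 0 < p - 1 := by linarith
  set e₁ : ℝ := -(γ * q * r) / 2 with he₁
  set e₂ : ℝ := -(δ * p * r) / (2 * (p - 1)) with he₂
  set k₁ : ℝ := (4 ^ |e₁|) ^ (1 / (q * r)) with hk₁
  set k₂ : ℝ := (4 ^ |e₂|) ^ ((p - 1) / (p * r)) with hk₂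
  have hk₁0 : 0 < k₁ := Real.rpow_pos_of_pos (Real.rpow_pos_of_pos (by norm_num) _) _
  have hk₂0 : 0 < k₂ := Real.rpow_pos_of_pos (Real.rpow_pos_of_pos (by norm_num) _) _
  refine ⟨k₁ * k₂ * 9 ^ (-(γ + δ) / 2), by positivity, ?_⟩
  intro u₀ v₀ lam hsq hlam0 hlam1 hbound
  set S : ℝ := ‖u₀‖ ^ 2 + ‖v₀‖ ^ 2 with hSdef
  have hS0 : 0 < S := by
    nlinarith [Real.sq_sqrt (show (0:ℝ) ≤ S by positivity), Real.sqrt_nonneg S]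
  have hS9 : 9 ≤ S := by
    nlinarith [Real.sq_sqrt (show (0:ℝ) ≤ S by positivity)]
  -- volumes
  have hV₁ : (volume (cube n u₀ lam)).toReal = lam ^ n := by
    rw [volume_cube, ENNReal.toReal_pow, ENNReal.toReal_ofReal hlam0.le]
  have hV₂ : (volume (cube n v₀ 1)).toReal = 1 := by
    rw [volume_cube]; simp
  have hV₁0 : 0 < (volume (cube n u₀ lam)).toReal := by
    rw [hV₁]; positivity
  have hQ₂fin : volume (cube n v₀ 1) < ⊤ := by
    rw [volume_cube]; exact ENNReal.pow_lt_top (by simp [ENNReal.ofReal_lt_top])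
  have hQ₁fin : volume (cube n u₀ lam) < ⊤ := by
    rw [volume_cube]; exact ENNReal.pow_lt_top (by simp [ENNReal.ofReal_lt_top])
  -- pointwise bounds
  have hpt : ∀ u ∈ cube n u₀ lam, ∀ v ∈ cube n v₀ 1,
      S / 4 ≤ ‖u‖ ^ 2 + ‖v‖ ^ 2 ∧ ‖u‖ ^ 2 + ‖v‖ ^ 2 ≤ 4 * S := by
    intro u hu v hv
    obtain ⟨h1, h2⟩ := hbound u hu v hv
    have hx0 : (0:ℝ) ≤ ‖u‖ ^ 2 + ‖v‖ ^ 2 := by positivity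
    constructor
    · nlinarith [Real.sq_sqrt hx0, Real.sq_sqrt hS0.le, Real.sqrt_nonneg S,
        Real.sqrt_nonneg (‖u‖ ^ 2 + ‖v‖ ^ 2)]
    · nlinarith [Real.sq_sqrt hx0, Real.sq_sqrt hS0.le, Real.sqrt_nonneg S,
        Real.sqrt_nonneg (‖u‖ ^ 2 + ‖v‖ ^ 2)]
  -- bound the double integrals
  have key : ∀ e : ℝ,
      (0 ≤ ∫ u in cube n u₀ lam, ∫ v in cube n v₀ 1, (‖u‖ ^ 2 + ‖v‖ ^ 2) ^ e) ∧
      (∫ u in cube n u₀ lam, ∫ v in cube n v₀ 1, (‖u‖ ^ 2 + ‖v‖ ^ 2) ^ e)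
        ≤ (4 ^ |e| * S ^ e) * ((volume (cube n u₀ lam)).toReal
            * (volume (cube n v₀ 1)).toReal) := by
    intro e
    have hM0 : 0 ≤ 4 ^ |e| * S ^ e := by positivity
    have hinner_nonneg : ∀ u : EuclideanSpace ℝ (Fin n),
        0 ≤ ∫ v in cube n v₀ 1, (‖u‖ ^ 2 + ‖v‖ ^ 2) ^ e :=
      fun u => setIntegral_nonneg (measurableSet_cube n v₀ 1)
        (fun v _ => Real.rpow_nonneg (by positivity) _)
    have hinner_le : ∀ u ∈ cube n u₀ lam,
        (∫ v in cube n v₀ 1, (‖u‖ ^ 2 + ‖v‖ ^ 2) ^ e)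
          ≤ (4 ^ |e| * S ^ e) * (volume (cube n v₀ 1)).toReal := by
      intro u hu
      have := norm_setIntegral_le_of_norm_le_const (μ := volume) hQ₂fin
        (f := fun v => (‖u‖ ^ 2 + ‖v‖ ^ 2) ^ e) (C := 4 ^ |e| * S ^ e) ?_
      · exact (le_abs_self _).trans this
      · intro v hv
        rw [Real.norm_of_nonneg (Real.rpow_nonneg (by positivity) _)]
        exact rpow_bound e _ S hS0 (hpt u hu v hv).1 (hpt u hu v hv).2
    constructor
    · exact setIntegral_nonneg (measurableSet_cube n u₀ lam) fun u _ => hinner_nonneg u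
    · have := norm_setIntegral_le_of_norm_le_const (μ := volume) hQ₁fin
        (f := fun u => ∫ v in cube n v₀ 1, (‖u‖ ^ 2 + ‖v‖ ^ 2) ^ e)
        (C := (4 ^ |e| * S ^ e) * (volume (cube n v₀ 1)).toReal) ?_
      · calc (∫ u in cube n u₀ lam, ∫ v in cube n v₀ 1, (‖u‖ ^ 2 + ‖v‖ ^ 2) ^ e)
            ≤ (4 ^ |e| * S ^ e) * (volume (cube n v₀ 1)).toReal
              * (volume (cube n u₀ lam)).toReal := (le_abs_self _).trans this
          _ = (4 ^ |e| * S ^ e) * ((volume (cube n u₀ lam)).toReal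
              * (volume (cube n v₀ 1)).toReal) := by ring
      · intro u hu
        rw [Real.norm_of_nonneg (hinner_nonneg u)]
        exact hinner_le u hu
  -- averages
  have havg : ∀ e : ℝ,
      0 ≤ (1 / ((volume (cube n u₀ lam)).toReal * (volume (cube n v₀ 1)).toReal)) *
          ∫ u in cube n u₀ lam, ∫ v in cube n v₀ 1, (‖u‖ ^ 2 + ‖v‖ ^ 2) ^ e ∧
      (1 / ((volume (cube n u₀ lam)).toReal * (volume (cube n v₀ 1)).toReal)) *
          (∫ u in cube n u₀ lam, ∫ v in cube n v₀ 1, (‖u‖ ^ 2 + ‖v‖ ^ 2) ^ e)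
        ≤ 4 ^ |e| * S ^ e := by
    intro e
    have hVV : 0 < (volume (cube n u₀ lam)).toReal * (volume (cube n v₀ 1)).toReal := by
      rw [hV₂]; simpa using hV₁0
    obtain ⟨h0, hle⟩ := key e
    have h1 : (0:ℝ) ≤ 1 / ((volume (cube n u₀ lam)).toReal * (volume (cube n v₀ 1)).toReal) :=
      le_of_lt (one_div_pos.mpr hVV)
    refine ⟨mul_nonneg h1 h0, ?_⟩
    have h2 := mul_le_mul_of_nonneg_left hle h1
    refine h2.trans_eq ?_
    rw [one_div]
    field_simp
  have hA1 := havg e₁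
  have hA2 := havg e₂
  -- exponent arithmetic
  have hε : ζ / (n : ℝ) - 1 / p + 1 / q = (γ + δ) / (2 * n) := by
    rw [hζ]; field_simp; ring
  -- first two factors
  have hfac : (volume (cube n u₀ lam)).toReal ^ (ζ / (n : ℝ) - 1 / p + 1 / q) *
      (volume (cube n v₀ 1)).toReal ^ (ζ / (n : ℝ) - 1 / p + 1 / q)
      = lam ^ ((γ + δ) / 2) := by
    rw [hV₁, hV₂, Real.one_rpow, mul_one, hε, ← Real.rpow_natCast lam n,
      ← Real.rpow_mul hlam0.le]
    congr 1
    field_simp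
  -- bound average powers
  have hb1 : ((1 / ((volume (cube n u₀ lam)).toReal * (volume (cube n v₀ 1)).toReal)) *
      ∫ u in cube n u₀ lam, ∫ v in cube n v₀ 1, (‖u‖ ^ 2 + ‖v‖ ^ 2) ^ e₁) ^ (1 / (q * r))
      ≤ k₁ * S ^ (-γ / 2) := by
    have h := Real.rpow_le_rpow hA1.1 hA1.2 (by positivity : (0:ℝ) ≤ 1 / (q * r))
    refine h.trans_eq ?_
    rw [Real.mul_rpow (by positivity) (by positivity), ← Real.rpow_mul hS0.le, hk₁]
    congr 2
    rw [he₁]; field_simp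
  have hb2 : ((1 / ((volume (cube n u₀ lam)).toReal * (volume (cube n v₀ 1)).toReal)) *
      ∫ u in cube n u₀ lam, ∫ v in cube n v₀ 1, (‖u‖ ^ 2 + ‖v‖ ^ 2) ^ e₂) ^ ((p - 1) / (p * r))
      ≤ k₂ * S ^ (-δ / 2) := by
    have h := Real.rpow_le_rpow hA2.1 hA2.2 (by positivity : (0:ℝ) ≤ (p - 1) / (p * r))
    refine h.trans_eq ?_
    rw [Real.mul_rpow (by positivity) (by positivity), ← Real.rpow_mul hS0.le, hk₂]
    congr 2
    rw [he₂]; field_simp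
  -- assemble
  have hnonneg1 : 0 ≤ ((1 / ((volume (cube n u₀ lam)).toReal * (volume (cube n v₀ 1)).toReal)) *
      ∫ u in cube n u₀ lam, ∫ v in cube n v₀ 1, (‖u‖ ^ 2 + ‖v‖ ^ 2) ^ e₁) ^ (1 / (q * r)) :=
    Real.rpow_nonneg hA1.1 _
  have hnonneg2 : 0 ≤ ((1 / ((volume (cube n u₀ lam)).toReal * (volume (cube n v₀ 1)).toReal)) *
      ∫ u in cube n u₀ lam, ∫ v in cube n v₀ 1, (‖u‖ ^ 2 + ‖v‖ ^ 2) ^ e₂) ^ ((p - 1) / (p * r)) :=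
    Real.rpow_nonneg hA2.1 _
  calc (volume (cube n u₀ lam)).toReal ^ (ζ / (n : ℝ) - 1 / p + 1 / q) *
          (volume (cube n v₀ 1)).toReal ^ (ζ / (n : ℝ) - 1 / p + 1 / q) *
          ((1 / ((volume (cube n u₀ lam)).toReal * (volume (cube n v₀ 1)).toReal)) *
            ∫ u in cube n u₀ lam, ∫ v in cube n v₀ 1,
              (‖u‖ ^ 2 + ‖v‖ ^ 2) ^ (-(γ * q * r) / 2)) ^ (1 / (q * r)) *
          ((1 / ((volume (cube n u₀ lam)).toReal * (volume (cube n v₀ 1)).toReal)) *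
            ∫ u in cube n u₀ lam, ∫ v in cube n v₀ 1,
              (‖u‖ ^ 2 + ‖v‖ ^ 2) ^ (-(δ * p * r) / (2 * (p - 1)))) ^ ((p - 1) / (p * r))
      = lam ^ ((γ + δ) / 2) *
          (((1 / ((volume (cube n u₀ lam)).toReal * (volume (cube n v₀ 1)).toReal)) *
            ∫ u in cube n u₀ lam, ∫ v in cube n v₀ 1,
              (‖u‖ ^ 2 + ‖v‖ ^ 2) ^ e₁) ^ (1 / (q * r)) *
          ((1 / ((volume (cube n u₀ lam)).toReal * (volume (cube n v₀ 1)).toReal)) *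
            ∫ u in cube n u₀ lam, ∫ v in cube n v₀ 1,
              (‖u‖ ^ 2 + ‖v‖ ^ 2) ^ e₂) ^ ((p - 1) / (p * r))) := by
        rw [← hfac, he₁, he₂]; ring
    _ ≤ lam ^ ((γ + δ) / 2) * ((k₁ * S ^ (-γ / 2)) * (k₂ * S ^ (-δ / 2))) := by
        apply mul_le_mul_of_nonneg_left _ (Real.rpow_nonneg hlam0.le _)
        exact mul_le_mul hb1 hb2 hnonneg2 (by positivity)
    _ = (k₁ * k₂) * (lam ^ ((γ + δ) / 2) * S ^ (-(γ + δ) / 2)) := by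
        rw [show -(γ + δ) / 2 = -γ / 2 + -δ / 2 by ring, Real.rpow_add hS0]
        ring
    _ ≤ (k₁ * k₂) * (lam ^ ((γ + δ) / (2 * n)) * 9 ^ (-(γ + δ) / 2)) := by
        apply mul_le_mul_of_nonneg_left _ (by positivity)
        apply mul_le_mul
        · apply Real.rpow_le_rpow_of_exponent_ge hlam0 hlam1
          have hn1 : (1:ℝ) ≤ n := by exact_mod_cast hn
          rw [div_le_div_iff₀ (by positivity) (by norm_num)]
          nlinarith [mul_le_mul_of_nonneg_left (show (2:ℝ) ≤ 2 * n by linarith) hgd.le]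
        · exact Real.rpow_le_rpow_of_nonpos (by norm_num) hS9
            (by rw [neg_div]; linarith [div_nonneg hgd.le (by norm_num : (0:ℝ) ≤ 2)])
        · exact Real.rpow_nonneg (by positivity) _
        · exact Real.rpow_nonneg hlam0.le _
    _ = k₁ * k₂ * 9 ^ (-(γ + δ) / 2) * lam ^ ((γ + δ) / (2 * ↑n)) := by ring
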